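/- For every u ∈ ℝ³ with u ≠ 0, the map v ↦ exp(v^∧) from ℝ³ to 3×3 real matrices is differentiable at u, and its derivative in the direction w ∈ ℝ³ equals exp(u^∧)·(J_u w)^∧, where J_u = I₃ − ((1 − cos‖u‖)/‖u‖²) u^∧ + ((‖u‖ − sin‖u‖)/‖u‖³) (u^∧)². That is, J_u is the left-trivialised Jacobian of the exponential map of SO(3) at u. -/

import Mathlib

open scoped Nat


open Matrix

noncomputable section

/-- The `hat` map sending `u ∈ ℝ³` to the skew-symmetric matrix `u^∧` with `u^∧ v = u × v`. -/
def hat (u : EuclideanSpace ℝ (Fin 3)) : Matrix (Fin 3) (Fin 3) ℝ :=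
  !![0, -u 2, u 1; u 2, 0, -u 0; -u 1, u 0, 0]

/-- `R ∈ SO(3)`: real 3×3 matrices with `RᵀR = I` and `det R = 1`. -/
def SO3 (R : Matrix (Fin 3) (Fin 3) ℝ) : Prop := Rᵀ * R = 1 ∧ R.det = 1

/-- Matrix-vector multiplication as a map on Euclidean space. -/
def matVec (A : Matrix (Fin 3) (Fin 3) ℝ) (u : EuclideanSpace ℝ (Fin 3)) :
    EuclideanSpace ℝ (Fin 3) :=
  (WithLp.equiv 2 (Fin 3 → ℝ)).symm (A.mulVec ((WithLp.equiv 2 (Fin 3 → ℝ)) u))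

/-- The left-trivialised Jacobian of the exponential map of `SO(3)` at `u`. -/
def Jmat (u : EuclideanSpace ℝ (Fin 3)) : Matrix (Fin 3) (Fin 3) ℝ :=
  1 - ((1 - Real.cos ‖u‖) / ‖u‖ ^ 2) • hat u
    + ((‖u‖ - Real.sin ‖u‖) / ‖u‖ ^ 3) • (hat u * hat u)

attribute [local instance] Matrix.frobeniusNormedAddCommGroup Matrix.frobeniusNormedSpace


attribute [local instance] Matrix.frobeniusNormedRing Matrix.frobeniusNormedAlgebra

set_option maxHeartbeats 2000000

lemma key0 (a0 a1 a2 b0 b1 b2 r s c : ℝ) (hr : r ≠ 0)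
    (hr2 : r^2 = a0^2+a1^2+a2^2) (hsc : s^2+c^2 = 1) :
    (1 - c) / r ^ 2 * (-(a2 * b2) + -(a1 * b1) + (-(b2 * a2) + -(b1 * a1))) +
      (s * r ^ 2 - (1 - c) * (2 * r)) / (r ^ 2) ^ 2 *
          (r⁻¹ * (a0 * b0 + a1 * b1 + a2 * b2)) *
        (-(a2 * a2) + -(a1 * a1)) =
    (-(s / r * a2) + (1 - c) / r ^ 2 * (a1 * a0)) *
        (((1 - c) / r ^ 2 * a1 + (r - s) / r ^ 3 * (a0 * a2)) * b0 +
            (-((1 - c) / r ^ 2 * a0) + (r - s) / r ^ 3 * (a1 * a2)) * b1 +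
          (1 + (r - s) / r ^ 3 * (-(a1 * a1) + -(a0 * a0))) * b2) +
      (s / r * a1 + (1 - c) / r ^ 2 * (a2 * a0)) *
        (-(((1 - c) / r ^ 2 * a0 + (r - s) / r ^ 3 * (a2 * a1)) * b2) +
          (-((1 + (r - s) / r ^ 3 * (-(a2 * a2) + -(a0 * a0))) * b1) +
            -((-((1 - c) / r ^ 2 * a2) + (r - s) / r ^ 3 * (a0 * a1)) * b0))) := by
  have hnum : r^4*s*a1*b1 + r^4*s*a2*b2 + r^3*c*a0*a1*b2 - r^3*c*a0*a2*b1 + 2*r^3*c*a1*b1 + 2*r^3*c*a2*b2 - r^3*a0*a1*b2 + r^3*a0*a2*b1 - 2*r^3*a1*b1 - 2*r^3*a2*b2 - r^2*s*c*a0*a1*b2 + r^2*s*c*a0*a2*b1 - r^2*s*a0^2*a1*b1 - r^2*s*a0^2*a2*b2 + r^2*s*a0*a1*b2 - r^2*s*a0*a2*b1 - r^2*s*a1^3*b1 - r^2*s*a1^2*a2*b2 - r^2*s*a1*a2^2*b1 - r^2*s*a2^3*b2 + r*s^2*a0^2*a1*b1 + r*s^2*a0^2*a2*b2 - r*s^2*a0*a1^2*b0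 - r*s^2*a0*a2^2*b0 + r*c^2*a0^2*a1*b1 + r*c^2*a0^2*a2*b2 - r*c^2*a0*a1^2*b0 - r*c^2*a0*a2^2*b0 - r*c*a0^3*a1*b2 + r*c*a0^3*a2*b1 - 2*r*c*a0^2*a1*b1 - 2*r*c*a0^2*a2*b2 - r*c*a0*a1^3*b2 + r*c*a0*a1^2*a2*b1 - r*c*a0*a1*a2^2*b2 + r*c*a0*a2^3*b1 - 2*r*c*a1^3*b1 - 2*r*c*a1^2*a2*b2 - 2*r*c*a1*a2^2*b1 - 2*r*c*a2^3*b2 + r*a0^3*a1*b2 - r*a0^3*a2*b1 + r*a0^2*a1*b1 + r*a0^2*a2*b2 + r*a0*a1^3*b2 - r*a0*a1^2*a2*b1 + r*a0*a1^2*b0 + r*a0*a1*a2^2*b2 - r*a0*a2^3*b1 + r*a0*a2^2*b0 + 2*r*a1^3*b1 + 2*r*a1^2*a2*b2 + 2*r*a1*a2^2*b1 + 2*r*a2^3*b2 + s*c*a0^3*a1*b2 - s*c*a0^3*a2*b1 + s*c*a0*a1^3*b2 - s*c*a0*a1^2*a2*b1 + s*c*a0*a1*a2^2*b2 - s*c*a0*a2^3*b1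 - s*a0^3*a1*b2 + s*a0^3*a2*b1 - s*a0*a1^3*b2 + s*a0*a1^2*a2*b1 - s*a0*a1*a2^2*b2 + s*a0*a2^3*b1 = 0 := by
    linear_combination (r^2*s*a1*b1 + r^2*s*a2*b2 + r*c*a0*a1*b2 - r*c*a0*a2*b1 + 2*r*c*a1*b1 + 2*r*c*a2*b2 - r*a0*a1*b2 + r*a0*a2*b1 - 2*r*a1*b1 - 2*r*a2*b2 - s*c*a0*a1*b2 + s*c*a0*a2*b1 + s*a0*a1*b2 - s*a0*a2*b1) * hr2 + (r*a0^2*a1*b1 + r*a0^2*a2*b2 - r*a0*a1^2*b0 - r*a0*a2^2*b0) * hsc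
  field_simp
  linear_combination 1 * hnum

lemma key1 (a0 a1 a2 b0 b1 b2 r s c : ℝ) (hr : r ≠ 0)
    (hr2 : r^2 = a0^2+a1^2+a2^2) (hsc : s^2+c^2 = 1) :
    -(s / r * b2) +
        -((c * r - s) / r ^ 2 * (r⁻¹ * (a0 * b0 + a1 * b1 + a2 * b2)) * a2) +
      ((1 - c) / r ^ 2 * (a1 * b0 + b1 * a0) +
        (s * r ^ 2 - (1 - c) * (2 * r)) / (r ^ 2) ^ 2 *
            (r⁻¹ * (a0 * b0 + a1 * b1 + a2 * b2)) *
          (a1 * a0)) =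
    (1 + (1 - c) / r ^ 2 * (-(a2 * a2) + -(a1 * a1))) *
        (-((1 + (r - s) / r ^ 3 * (-(a1 * a1) + -(a0 * a0))) * b2) +
          (-((-((1 - c) / r ^ 2 * a0) + (r - s) / r ^ 3 * (a1 * a2)) * b1) +
            -(((1 - c) / r ^ 2 * a1 + (r - s) / r ^ 3 * (a0 * a2)) * b0))) +
      (s / r * a1 + (1 - c) / r ^ 2 * (a2 * a0)) *
        ((1 + (r - s) / r ^ 3 * (-(a2 * a2) + -(a1 * a1))) * b0 +
            ((1 - c) / r ^ 2 * a2 + (r - s) / r ^ 3 * (a1 * a0)) * b1 +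
          (-((1 - c) / r ^ 2 * a1) + (r - s) / r ^ 3 * (a2 * a0)) * b2) := by
  have hnum : r^5*b2 - r^4*s*a1*b0 - r^4*s*b2 + r^3*c*a1^2*b2 - r^3*c*a1*a2*b1 - 2*r^3*c*a1*b0 - r^3*a0^2*b2 - 2*r^3*a1^2*b2 + r^3*a1*a2*b1 + 2*r^3*a1*b0 - r^3*a2^2*b2 - r^2*s*c*a1^2*b2 + r^2*s*c*a1*a2*b1 + r^2*s*a0^2*a1*b0 + r^2*s*a0^2*b2 + r^2*s*a1^3*b0 + 2*r^2*s*a1^2*b2 + r^2*s*a1*a2^2*b0 - r^2*s*a1*a2*b1 + r^2*s*a2^2*b2 + r*s^2*a0*a1^2*b1 + r*s^2*a0*a1*a2*b2 - r*s^2*a1^3*b0 - r*s^2*a1*a2^2*b0 + r*c^2*a0*a1^2*b1 + r*c^2*a0*a1*a2*b2 - r*c^2*a1^3*b0 - r*c^2*a1*a2^2*b0 - r*c*a0^2*a1^2*b2 + r*c*a0^2*a1*a2*b1 + 2*r*c*a0^2*a1*b0 - r*c*a1^4*b2 + r*c*a1^3*a2*b1 + 2*r*c*a1^3*b0 - r*c*a1^2*a2^2*b2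 + r*c*a1*a2^3*b1 + 2*r*c*a1*a2^2*b0 + r*a0^2*a1^2*b2 - r*a0^2*a1*a2*b1 - 2*r*a0^2*a1*b0 - r*a0*a1^2*b1 - r*a0*a1*a2*b2 + r*a1^4*b2 - r*a1^3*a2*b1 - r*a1^3*b0 + r*a1^2*a2^2*b2 - r*a1*a2^3*b1 - r*a1*a2^2*b0 + s*c*a0^2*a1^2*b2 - s*c*a0^2*a1*a2*b1 + s*c*a1^4*b2 - s*c*a1^3*a2*b1 + s*c*a1^2*a2^2*b2 - s*c*a1*a2^3*b1 - s*a0^2*a1^2*b2 + s*a0^2*a1*a2*b1 - s*a1^4*b2 + s*a1^3*a2*b1 - s*a1^2*a2^2*b2 + s*a1*a2^3*b1 = 0 := by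
    linear_combination (r^3*b2 - r^2*s*a1*b0 - r^2*s*b2 + r*c*a1^2*b2 - r*c*a1*a2*b1 - 2*r*c*a1*b0 - r*a1^2*b2 + r*a1*a2*b1 + 2*r*a1*b0 - s*c*a1^2*b2 + s*c*a1*a2*b1 + s*a1^2*b2 - s*a1*a2*b1) * hr2 + (r*a0*a1^2*b1 + r*a0*a1*a2*b2 - r*a1^3*b0 - r*a1*a2^2*b0) * hsc
  field_simp
  linear_combination 1 * hnum

lemma key2 (a0 a1 a2 b0 b1 b2 r s c : ℝ) (hr : r ≠ 0)
    (hr2 : r^2 = a0^2+a1^2+a2^2) (hsc : s^2+c^2 = 1) :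
    s / r * b1 +
        (c * r - s) / r ^ 2 * (r⁻¹ * (a0 * b0 + a1 * b1 + a2 * b2)) * a1 +
      ((1 - c) / r ^ 2 * (a2 * b0 + b2 * a0) +
        (s * r ^ 2 - (1 - c) * (2 * r)) / (r ^ 2) ^ 2 *
            (r⁻¹ * (a0 * b0 + a1 * b1 + a2 * b2)) *
          (a2 * a0)) =
    (1 + (1 - c) / r ^ 2 * (-(a2 * a2) + -(a1 * a1))) *
        ((-((1 - c) / r ^ 2 * a2) + (r - s) / r ^ 3 * (a0 * a1)) * b0 +
            (1 + (r - s) / r ^ 3 * (-(a2 * a2) + -(a0 * a0))) * b1 +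
          ((1 - c) / r ^ 2 * a0 + (r - s) / r ^ 3 * (a2 * a1)) * b2) +
      (-(s / r * a2) + (1 - c) / r ^ 2 * (a1 * a0)) *
        (-((-((1 - c) / r ^ 2 * a1) + (r - s) / r ^ 3 * (a2 * a0)) * b2) +
          (-(((1 - c) / r ^ 2 * a2 + (r - s) / r ^ 3 * (a1 * a0)) * b1) +
            -((1 + (r - s) / r ^ 3 * (-(a2 * a2) + -(a1 * a1))) * b0))) := by
  have hnum : -r^5*b1 - r^4*s*a2*b0 + r^4*s*b1 + r^3*c*a1*a2*b2 - r^3*c*a2^2*b1 - 2*r^3*c*a2*b0 + r^3*a0^2*b1 + r^3*a1^2*b1 - r^3*a1*a2*b2 + 2*r^3*a2^2*b1 + 2*r^3*a2*b0 - r^2*s*c*a1*a2*b2 + r^2*s*c*a2^2*b1 + r^2*s*a0^2*a2*b0 - r^2*s*a0^2*b1 + r^2*s*a1^2*a2*b0 - r^2*s*a1^2*b1 + r^2*s*a1*a2*b2 + r^2*s*a2^3*b0 - 2*r^2*s*a2^2*b1 + r*s^2*a0*a1*a2*b1 + r*s^2*a0*a2^2*b2 - r*s^2*a1^2*a2*b0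 - r*s^2*a2^3*b0 + r*c^2*a0*a1*a2*b1 + r*c^2*a0*a2^2*b2 - r*c^2*a1^2*a2*b0 - r*c^2*a2^3*b0 - r*c*a0^2*a1*a2*b2 + r*c*a0^2*a2^2*b1 + 2*r*c*a0^2*a2*b0 - r*c*a1^3*a2*b2 + r*c*a1^2*a2^2*b1 + 2*r*c*a1^2*a2*b0 - r*c*a1*a2^3*b2 + r*c*a2^4*b1 + 2*r*c*a2^3*b0 + r*a0^2*a1*a2*b2 - r*a0^2*a2^2*b1 - 2*r*a0^2*a2*b0 - r*a0*a1*a2*b1 - r*a0*a2^2*b2 + r*a1^3*a2*b2 - r*a1^2*a2^2*b1 - r*a1^2*a2*b0 + r*a1*a2^3*b2 - r*a2^4*b1 - r*a2^3*b0 + s*c*a0^2*a1*a2*b2 - s*c*a0^2*a2^2*b1 + s*c*a1^3*a2*b2 - s*c*a1^2*a2^2*b1 + s*c*a1*a2^3*b2 - s*c*a2^4*b1 - s*a0^2*a1*a2*b2 + s*a0^2*a2^2*b1 - s*a1^3*a2*b2 + s*a1^2*a2^2*b1 - s*a1*a2^3*b2 + s*a2^4*b1 = 0 := by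
    linear_combination (-r^3*b1 - r^2*s*a2*b0 + r^2*s*b1 + r*c*a1*a2*b2 - r*c*a2^2*b1 - 2*r*c*a2*b0 - r*a1*a2*b2 + r*a2^2*b1 + 2*r*a2*b0 - s*c*a1*a2*b2 + s*c*a2^2*b1 + s*a1*a2*b2 - s*a2^2*b1) * hr2 + (r*a0*a1*a2*b1 + r*a0*a2^2*b2 - r*a1^2*a2*b0 - r*a2^3*b0) * hsc
  field_simp
  linear_combination 1 * hnum

lemma key3 (a0 a1 a2 b0 b1 b2 r s c : ℝ) (hr : r ≠ 0)
    (hr2 : r^2 = a0^2+a1^2+a2^2) (hsc : s^2+c^2 = 1) :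
    s / r * b2 +
        (c * r - s) / r ^ 2 * (r⁻¹ * (a0 * b0 + a1 * b1 + a2 * b2)) * a2 +
      ((1 - c) / r ^ 2 * (a0 * b1 + b0 * a1) +
        (s * r ^ 2 - (1 - c) * (2 * r)) / (r ^ 2) ^ 2 *
            (r⁻¹ * (a0 * b0 + a1 * b1 + a2 * b2)) *
          (a0 * a1)) =
    (1 + (1 - c) / r ^ 2 * (-(a2 * a2) + -(a0 * a0))) *
        (((1 - c) / r ^ 2 * a1 + (r - s) / r ^ 3 * (a0 * a2)) * b0 +
            (-((1 - c) / r ^ 2 * a0) + (r - s) / r ^ 3 * (a1 * a2)) * b1 +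
          (1 + (r - s) / r ^ 3 * (-(a1 * a1) + -(a0 * a0))) * b2) +
      (-(s / r * a0) + (1 - c) / r ^ 2 * (a2 * a1)) *
        (-(((1 - c) / r ^ 2 * a0 + (r - s) / r ^ 3 * (a2 * a1)) * b2) +
          (-((1 + (r - s) / r ^ 3 * (-(a2 * a2) + -(a0 * a0))) * b1) +
            -((-((1 - c) / r ^ 2 * a2) + (r - s) / r ^ 3 * (a0 * a1)) * b0))) := by
  have hnum : -r^5*b2 - r^4*s*a0*b1 + r^4*s*b2 - r^3*c*a0^2*b2 + r^3*c*a0*a2*b0 - 2*r^3*c*a0*b1 + 2*r^3*a0^2*b2 - r^3*a0*a2*b0 + 2*r^3*a0*b1 + r^3*a1^2*b2 + r^3*a2^2*b2 + r^2*s*c*a0^2*b2 - r^2*s*c*a0*a2*b0 + r^2*s*a0^3*b1 - 2*r^2*s*a0^2*b2 + r^2*s*a0*a1^2*b1 + r^2*s*a0*a2^2*b1 + r^2*s*a0*a2*b0 - r^2*s*a1^2*b2 - r^2*s*a2^2*b2 - r*s^2*a0^3*b1 + r*s^2*a0^2*a1*b0 + r*s^2*a0*a1*a2*b2 - r*s^2*a0*a2^2*b1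 - r*c^2*a0^3*b1 + r*c^2*a0^2*a1*b0 + r*c^2*a0*a1*a2*b2 - r*c^2*a0*a2^2*b1 + r*c*a0^4*b2 - r*c*a0^3*a2*b0 + 2*r*c*a0^3*b1 + r*c*a0^2*a1^2*b2 + r*c*a0^2*a2^2*b2 - r*c*a0*a1^2*a2*b0 + 2*r*c*a0*a1^2*b1 - r*c*a0*a2^3*b0 + 2*r*c*a0*a2^2*b1 - r*a0^4*b2 + r*a0^3*a2*b0 - r*a0^3*b1 - r*a0^2*a1^2*b2 - r*a0^2*a1*b0 - r*a0^2*a2^2*b2 + r*a0*a1^2*a2*b0 - 2*r*a0*a1^2*b1 - r*a0*a1*a2*b2 + r*a0*a2^3*b0 - r*a0*a2^2*b1 - s*c*a0^4*b2 + s*c*a0^3*a2*b0 - s*c*a0^2*a1^2*b2 - s*c*a0^2*a2^2*b2 + s*c*a0*a1^2*a2*b0 + s*c*a0*a2^3*b0 + s*a0^4*b2 - s*a0^3*a2*b0 + s*a0^2*a1^2*b2 + s*a0^2*a2^2*b2 - s*a0*a1^2*a2*b0 - s*a0*a2^3*b0 = 0 := by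
    linear_combination (-r^3*b2 - r^2*s*a0*b1 + r^2*s*b2 - r*c*a0^2*b2 + r*c*a0*a2*b0 - 2*r*c*a0*b1 + r*a0^2*b2 - r*a0*a2*b0 + 2*r*a0*b1 + s*c*a0^2*b2 - s*c*a0*a2*b0 - s*a0^2*b2 + s*a0*a2*b0) * hr2 + (-r*a0^3*b1 + r*a0^2*a1*b0 + r*a0*a1*a2*b2 - r*a0*a2^2*b1) * hsc
  field_simp
  linear_combination 1 * hnum

lemma key4 (a0 a1 a2 b0 b1 b2 r s c : ℝ) (hr : r ≠ 0)
    (hr2 : r^2 = a0^2+a1^2+a2^2) (hsc : s^2+c^2 = 1) :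
    (1 - c) / r ^ 2 * (-(a2 * b2) + -(a0 * b0) + (-(b2 * a2) + -(b0 * a0))) +
      (s * r ^ 2 - (1 - c) * (2 * r)) / (r ^ 2) ^ 2 *
          (r⁻¹ * (a0 * b0 + a1 * b1 + a2 * b2)) *
        (-(a2 * a2) + -(a0 * a0)) =
    (s / r * a2 + (1 - c) / r ^ 2 * (a0 * a1)) *
        (-((1 + (r - s) / r ^ 3 * (-(a1 * a1) + -(a0 * a0))) * b2) +
          (-((-((1 - c) / r ^ 2 * a0) + (r - s) / r ^ 3 * (a1 * a2)) * b1) +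
            -(((1 - c) / r ^ 2 * a1 + (r - s) / r ^ 3 * (a0 * a2)) * b0))) +
      (-(s / r * a0) + (1 - c) / r ^ 2 * (a2 * a1)) *
        ((1 + (r - s) / r ^ 3 * (-(a2 * a2) + -(a1 * a1))) * b0 +
            ((1 - c) / r ^ 2 * a2 + (r - s) / r ^ 3 * (a1 * a0)) * b1 +
          (-((1 - c) / r ^ 2 * a1) + (r - s) / r ^ 3 * (a2 * a0)) * b2) := by
  have hnum : r^4*s*a0*b0 + r^4*s*a2*b2 - r^3*c*a0*a1*b2 + 2*r^3*c*a0*b0 + r^3*c*a1*a2*b0 + 2*r^3*c*a2*b2 + r^3*a0*a1*b2 - 2*r^3*a0*b0 - r^3*a1*a2*b0 - 2*r^3*a2*b2 + r^2*s*c*a0*a1*b2 - r^2*s*c*a1*a2*b0 - r^2*s*a0^3*b0 - r^2*s*a0^2*a2*b2 - r^2*s*a0*a1^2*b0 - r^2*s*a0*a1*b2 - r^2*s*a0*a2^2*b0 - r^2*s*a1^2*a2*b2 + r^2*s*a1*a2*b0 - r^2*s*a2^3*b2 - r*s^2*a0^2*a1*b1 + r*s^2*a0*a1^2*b0 + r*s^2*a1^2*a2*b2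 - r*s^2*a1*a2^2*b1 - r*c^2*a0^2*a1*b1 + r*c^2*a0*a1^2*b0 + r*c^2*a1^2*a2*b2 - r*c^2*a1*a2^2*b1 + r*c*a0^3*a1*b2 - 2*r*c*a0^3*b0 - r*c*a0^2*a1*a2*b0 - 2*r*c*a0^2*a2*b2 + r*c*a0*a1^3*b2 - 2*r*c*a0*a1^2*b0 + r*c*a0*a1*a2^2*b2 - 2*r*c*a0*a2^2*b0 - r*c*a1^3*a2*b0 - 2*r*c*a1^2*a2*b2 - r*c*a1*a2^3*b0 - 2*r*c*a2^3*b2 - r*a0^3*a1*b2 + 2*r*a0^3*b0 + r*a0^2*a1*a2*b0 + r*a0^2*a1*b1 + 2*r*a0^2*a2*b2 - r*a0*a1^3*b2 + r*a0*a1^2*b0 - r*a0*a1*a2^2*b2 + 2*r*a0*a2^2*b0 + r*a1^3*a2*b0 + r*a1^2*a2*b2 + r*a1*a2^3*b0 + r*a1*a2^2*b1 + 2*r*a2^3*b2 - s*c*a0^3*a1*b2 + s*c*a0^2*a1*a2*b0 - s*c*a0*a1^3*b2 - s*c*a0*a1*a2^2*b2 + s*c*a1^3*a2*b0 + s*c*a1*a2^3*b0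 + s*a0^3*a1*b2 - s*a0^2*a1*a2*b0 + s*a0*a1^3*b2 + s*a0*a1*a2^2*b2 - s*a1^3*a2*b0 - s*a1*a2^3*b0 = 0 := by
    linear_combination (r^2*s*a0*b0 + r^2*s*a2*b2 - r*c*a0*a1*b2 + 2*r*c*a0*b0 + r*c*a1*a2*b0 + 2*r*c*a2*b2 + r*a0*a1*b2 - 2*r*a0*b0 - r*a1*a2*b0 - 2*r*a2*b2 + s*c*a0*a1*b2 - s*c*a1*a2*b0 - s*a0*a1*b2 + s*a1*a2*b0) * hr2 + (-r*a0^2*a1*b1 + r*a0*a1^2*b0 + r*a1^2*a2*b2 - r*a1*a2^2*b1) * hsc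
  field_simp
  linear_combination 1 * hnum

lemma key5 (a0 a1 a2 b0 b1 b2 r s c : ℝ) (hr : r ≠ 0)
    (hr2 : r^2 = a0^2+a1^2+a2^2) (hsc : s^2+c^2 = 1) :
    -(s / r * b0) +
        -((c * r - s) / r ^ 2 * (r⁻¹ * (a0 * b0 + a1 * b1 + a2 * b2)) * a0) +
      ((1 - c) / r ^ 2 * (a2 * b1 + b2 * a1) +
        (s * r ^ 2 - (1 - c) * (2 * r)) / (r ^ 2) ^ 2 *
            (r⁻¹ * (a0 * b0 + a1 * b1 + a2 * b2)) *
          (a2 * a1)) =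
    (s / r * a2 + (1 - c) / r ^ 2 * (a0 * a1)) *
        ((-((1 - c) / r ^ 2 * a2) + (r - s) / r ^ 3 * (a0 * a1)) * b0 +
            (1 + (r - s) / r ^ 3 * (-(a2 * a2) + -(a0 * a0))) * b1 +
          ((1 - c) / r ^ 2 * a0 + (r - s) / r ^ 3 * (a2 * a1)) * b2) +
      (1 + (1 - c) / r ^ 2 * (-(a2 * a2) + -(a0 * a0))) *
        (-((-((1 - c) / r ^ 2 * a1) + (r - s) / r ^ 3 * (a2 * a0)) * b2) +
          (-(((1 - c) / r ^ 2 * a2 + (r - s) / r ^ 3 * (a1 * a0)) * b1) +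
            -((1 + (r - s) / r ^ 3 * (-(a2 * a2) + -(a1 * a1))) * b0))) := by
  have hnum : r^5*b0 - r^4*s*a2*b1 - r^4*s*b0 - r^3*c*a0*a2*b2 + r^3*c*a2^2*b0 - 2*r^3*c*a2*b1 - r^3*a0^2*b0 + r^3*a0*a2*b2 - r^3*a1^2*b0 - 2*r^3*a2^2*b0 + 2*r^3*a2*b1 + r^2*s*c*a0*a2*b2 - r^2*s*c*a2^2*b0 + r^2*s*a0^2*a2*b1 + r^2*s*a0^2*b0 - r^2*s*a0*a2*b2 + r^2*s*a1^2*a2*b1 + r^2*s*a1^2*b0 + r^2*s*a2^3*b1 + 2*r^2*s*a2^2*b0 - r*s^2*a0^2*a2*b1 + r*s^2*a0*a1*a2*b0 + r*s^2*a1*a2^2*b2 - r*s^2*a2^3*b1 - r*c^2*a0^2*a2*b1 + r*c^2*a0*a1*a2*b0 + r*c^2*a1*a2^2*b2 - r*c^2*a2^3*b1 + r*c*a0^3*a2*b2 - r*c*a0^2*a2^2*b0 + 2*r*c*a0^2*a2*b1 + r*c*a0*a1^2*a2*b2 + r*c*a0*a2^3*b2 - r*c*a1^2*a2^2*b0 +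 2*r*c*a1^2*a2*b1 - r*c*a2^4*b0 + 2*r*c*a2^3*b1 - r*a0^3*a2*b2 + r*a0^2*a2^2*b0 - r*a0^2*a2*b1 - r*a0*a1^2*a2*b2 - r*a0*a1*a2*b0 - r*a0*a2^3*b2 + r*a1^2*a2^2*b0 - 2*r*a1^2*a2*b1 - r*a1*a2^2*b2 + r*a2^4*b0 - r*a2^3*b1 - s*c*a0^3*a2*b2 + s*c*a0^2*a2^2*b0 - s*c*a0*a1^2*a2*b2 - s*c*a0*a2^3*b2 + s*c*a1^2*a2^2*b0 + s*c*a2^4*b0 + s*a0^3*a2*b2 - s*a0^2*a2^2*b0 + s*a0*a1^2*a2*b2 + s*a0*a2^3*b2 - s*a1^2*a2^2*b0 - s*a2^4*b0 = 0 := by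
    linear_combination (r^3*b0 - r^2*s*a2*b1 - r^2*s*b0 - r*c*a0*a2*b2 + r*c*a2^2*b0 - 2*r*c*a2*b1 + r*a0*a2*b2 - r*a2^2*b0 + 2*r*a2*b1 + s*c*a0*a2*b2 - s*c*a2^2*b0 - s*a0*a2*b2 + s*a2^2*b0) * hr2 + (-r*a0^2*a2*b1 + r*a0*a1*a2*b0 + r*a1*a2^2*b2 - r*a2^3*b1) * hsc
  field_simp
  linear_combination 1 * hnum

lemma key6 (a0 a1 a2 b0 b1 b2 r s c : ℝ) (hr : r ≠ 0)
    (hr2 : r^2 = a0^2+a1^2+a2^2) (hsc : s^2+c^2 = 1) :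
    -(s / r * b1) +
        -((c * r - s) / r ^ 2 * (r⁻¹ * (a0 * b0 + a1 * b1 + a2 * b2)) * a1) +
      ((1 - c) / r ^ 2 * (a0 * b2 + b0 * a2) +
        (s * r ^ 2 - (1 - c) * (2 * r)) / (r ^ 2) ^ 2 *
            (r⁻¹ * (a0 * b0 + a1 * b1 + a2 * b2)) *
          (a0 * a2)) =
    (s / r * a0 + (1 - c) / r ^ 2 * (a1 * a2)) *
        (((1 - c) / r ^ 2 * a1 + (r - s) / r ^ 3 * (a0 * a2)) * b0 +
            (-((1 - c) / r ^ 2 * a0) + (r - s) / r ^ 3 * (a1 * a2)) * b1 +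
          (1 + (r - s) / r ^ 3 * (-(a1 * a1) + -(a0 * a0))) * b2) +
      (1 + (1 - c) / r ^ 2 * (-(a1 * a1) + -(a0 * a0))) *
        (-(((1 - c) / r ^ 2 * a0 + (r - s) / r ^ 3 * (a2 * a1)) * b2) +
          (-((1 + (r - s) / r ^ 3 * (-(a2 * a2) + -(a0 * a0))) * b1) +
            -((-((1 - c) / r ^ 2 * a2) + (r - s) / r ^ 3 * (a0 * a1)) * b0))) := by
  have hnum : r^5*b1 - r^4*s*a0*b2 - r^4*s*b1 + r^3*c*a0^2*b1 - r^3*c*a0*a1*b0 - 2*r^3*c*a0*b2 - 2*r^3*a0^2*b1 + r^3*a0*a1*b0 + 2*r^3*a0*b2 - r^3*a1^2*b1 - r^3*a2^2*b1 - r^2*s*c*a0^2*b1 + r^2*s*c*a0*a1*b0 + r^2*s*a0^3*b2 + 2*r^2*s*a0^2*b1 + r^2*s*a0*a1^2*b2 - r^2*s*a0*a1*b0 + r^2*s*a0*a2^2*b2 + r^2*s*a1^2*b1 + r^2*s*a2^2*b1 - r*s^2*a0^3*b2 + r*s^2*a0^2*a2*b0 - r*s^2*a0*a1^2*b2 + r*s^2*a0*a1*a2*b1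 - r*c^2*a0^3*b2 + r*c^2*a0^2*a2*b0 - r*c^2*a0*a1^2*b2 + r*c^2*a0*a1*a2*b1 - r*c*a0^4*b1 + r*c*a0^3*a1*b0 + 2*r*c*a0^3*b2 - r*c*a0^2*a1^2*b1 - r*c*a0^2*a2^2*b1 + r*c*a0*a1^3*b0 + 2*r*c*a0*a1^2*b2 + r*c*a0*a1*a2^2*b0 + 2*r*c*a0*a2^2*b2 + r*a0^4*b1 - r*a0^3*a1*b0 - r*a0^3*b2 + r*a0^2*a1^2*b1 + r*a0^2*a2^2*b1 - r*a0^2*a2*b0 - r*a0*a1^3*b0 - r*a0*a1^2*b2 - r*a0*a1*a2^2*b0 - r*a0*a1*a2*b1 - 2*r*a0*a2^2*b2 + s*c*a0^4*b1 - s*c*a0^3*a1*b0 + s*c*a0^2*a1^2*b1 + s*c*a0^2*a2^2*b1 - s*c*a0*a1^3*b0 - s*c*a0*a1*a2^2*b0 - s*a0^4*b1 + s*a0^3*a1*b0 - s*a0^2*a1^2*b1 - s*a0^2*a2^2*b1 + s*a0*a1^3*b0 + s*a0*a1*a2^2*b0 = 0 := by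
    linear_combination (r^3*b1 - r^2*s*a0*b2 - r^2*s*b1 + r*c*a0^2*b1 - r*c*a0*a1*b0 - 2*r*c*a0*b2 - r*a0^2*b1 + r*a0*a1*b0 + 2*r*a0*b2 - s*c*a0^2*b1 + s*c*a0*a1*b0 + s*a0^2*b1 - s*a0*a1*b0) * hr2 + (-r*a0^3*b2 + r*a0^2*a2*b0 - r*a0*a1^2*b2 + r*a0*a1*a2*b1) * hsc
  field_simp
  linear_combination 1 * hnum

lemma key7 (a0 a1 a2 b0 b1 b2 r s c : ℝ) (hr : r ≠ 0)
    (hr2 : r^2 = a0^2+a1^2+a2^2) (hsc : s^2+c^2 = 1) :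
    s / r * b0 +
        (c * r - s) / r ^ 2 * (r⁻¹ * (a0 * b0 + a1 * b1 + a2 * b2)) * a0 +
      ((1 - c) / r ^ 2 * (a1 * b2 + b1 * a2) +
        (s * r ^ 2 - (1 - c) * (2 * r)) / (r ^ 2) ^ 2 *
            (r⁻¹ * (a0 * b0 + a1 * b1 + a2 * b2)) *
          (a1 * a2)) =
    (-(s / r * a1) + (1 - c) / r ^ 2 * (a0 * a2)) *
        (-((1 + (r - s) / r ^ 3 * (-(a1 * a1) + -(a0 * a0))) * b2) +
          (-((-((1 - c) / r ^ 2 * a0) + (r - s) / r ^ 3 * (a1 * a2)) * b1) +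
            -(((1 - c) / r ^ 2 * a1 + (r - s) / r ^ 3 * (a0 * a2)) * b0))) +
      (1 + (1 - c) / r ^ 2 * (-(a1 * a1) + -(a0 * a0))) *
        ((1 + (r - s) / r ^ 3 * (-(a2 * a2) + -(a1 * a1))) * b0 +
            ((1 - c) / r ^ 2 * a2 + (r - s) / r ^ 3 * (a1 * a0)) * b1 +
          (-((1 - c) / r ^ 2 * a1) + (r - s) / r ^ 3 * (a2 * a0)) * b2) := by
  have hnum : -r^5*b0 - r^4*s*a1*b2 + r^4*s*b0 + r^3*c*a0*a1*b1 - r^3*c*a1^2*b0 - 2*r^3*c*a1*b2 + r^3*a0^2*b0 - r^3*a0*a1*b1 + 2*r^3*a1^2*b0 + 2*r^3*a1*b2 + r^3*a2^2*b0 - r^2*s*c*a0*a1*b1 + r^2*s*c*a1^2*b0 + r^2*s*a0^2*a1*b2 - r^2*s*a0^2*b0 + r^2*s*a0*a1*b1 + r^2*s*a1^3*b2 - 2*r^2*s*a1^2*b0 + r^2*s*a1*a2^2*b2 - r^2*s*a2^2*b0 - r*s^2*a0^2*a1*b2 + r*s^2*a0*a1*a2*b0 - r*s^2*a1^3*b2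 + r*s^2*a1^2*a2*b1 - r*c^2*a0^2*a1*b2 + r*c^2*a0*a1*a2*b0 - r*c^2*a1^3*b2 + r*c^2*a1^2*a2*b1 - r*c*a0^3*a1*b1 + r*c*a0^2*a1^2*b0 + 2*r*c*a0^2*a1*b2 - r*c*a0*a1^3*b1 - r*c*a0*a1*a2^2*b1 + r*c*a1^4*b0 + 2*r*c*a1^3*b2 + r*c*a1^2*a2^2*b0 + 2*r*c*a1*a2^2*b2 + r*a0^3*a1*b1 - r*a0^2*a1^2*b0 - r*a0^2*a1*b2 + r*a0*a1^3*b1 + r*a0*a1*a2^2*b1 - r*a0*a1*a2*b0 - r*a1^4*b0 - r*a1^3*b2 - r*a1^2*a2^2*b0 - r*a1^2*a2*b1 - 2*r*a1*a2^2*b2 + s*c*a0^3*a1*b1 - s*c*a0^2*a1^2*b0 + s*c*a0*a1^3*b1 + s*c*a0*a1*a2^2*b1 - s*c*a1^4*b0 - s*c*a1^2*a2^2*b0 - s*a0^3*a1*b1 + s*a0^2*a1^2*b0 - s*a0*a1^3*b1 - s*a0*a1*a2^2*b1 + s*a1^4*b0 + s*a1^2*a2^2*b0 = 0 := by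
    linear_combination (-r^3*b0 - r^2*s*a1*b2 + r^2*s*b0 + r*c*a0*a1*b1 - r*c*a1^2*b0 - 2*r*c*a1*b2 - r*a0*a1*b1 + r*a1^2*b0 + 2*r*a1*b2 - s*c*a0*a1*b1 + s*c*a1^2*b0 + s*a0*a1*b1 - s*a1^2*b0) * hr2 + (-r*a0^2*a1*b2 + r*a0*a1*a2*b0 - r*a1^3*b2 + r*a1^2*a2*b1) * hsc
  field_simp
  linear_combination 1 * hnum

lemma key8 (a0 a1 a2 b0 b1 b2 r s c : ℝ) (hr : r ≠ 0)
    (hr2 : r^2 = a0^2+a1^2+a2^2) (hsc : s^2+c^2 = 1) :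
    (1 - c) / r ^ 2 * (-(a1 * b1) + -(a0 * b0) + (-(b1 * a1) + -(b0 * a0))) +
      (s * r ^ 2 - (1 - c) * (2 * r)) / (r ^ 2) ^ 2 *
          (r⁻¹ * (a0 * b0 + a1 * b1 + a2 * b2)) *
        (-(a1 * a1) + -(a0 * a0)) =
    (-(s / r * a1) + (1 - c) / r ^ 2 * (a0 * a2)) *
        ((-((1 - c) / r ^ 2 * a2) + (r - s) / r ^ 3 * (a0 * a1)) * b0 +
            (1 + (r - s) / r ^ 3 * (-(a2 * a2) + -(a0 * a0))) * b1 +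
          ((1 - c) / r ^ 2 * a0 + (r - s) / r ^ 3 * (a2 * a1)) * b2) +
      (s / r * a0 + (1 - c) / r ^ 2 * (a1 * a2)) *
        (-((-((1 - c) / r ^ 2 * a1) + (r - s) / r ^ 3 * (a2 * a0)) * b2) +
          (-(((1 - c) / r ^ 2 * a2 + (r - s) / r ^ 3 * (a1 * a0)) * b1) +
            -((1 + (r - s) / r ^ 3 * (-(a2 * a2) + -(a1 * a1))) * b0))) := by
  have hnum : r^4*s*a0*b0 + r^4*s*a1*b1 + r^3*c*a0*a2*b1 + 2*r^3*c*a0*b0 - r^3*c*a1*a2*b0 + 2*r^3*c*a1*b1 - r^3*a0*a2*b1 - 2*r^3*a0*b0 + r^3*a1*a2*b0 - 2*r^3*a1*b1 - r^2*s*c*a0*a2*b1 + r^2*s*c*a1*a2*b0 - r^2*s*a0^3*b0 - r^2*s*a0^2*a1*b1 - r^2*s*a0*a1^2*b0 - r^2*s*a0*a2^2*b0 + r^2*s*a0*a2*b1 - r^2*s*a1^3*b1 - r^2*s*a1*a2^2*b1 - r^2*s*a1*a2*b0 - r*s^2*a0^2*a2*b2 + r*s^2*a0*a2^2*b0 - r*s^2*a1^2*a2*b2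 + r*s^2*a1*a2^2*b1 - r*c^2*a0^2*a2*b2 + r*c^2*a0*a2^2*b0 - r*c^2*a1^2*a2*b2 + r*c^2*a1*a2^2*b1 - r*c*a0^3*a2*b1 - 2*r*c*a0^3*b0 + r*c*a0^2*a1*a2*b0 - 2*r*c*a0^2*a1*b1 - r*c*a0*a1^2*a2*b1 - 2*r*c*a0*a1^2*b0 - r*c*a0*a2^3*b1 - 2*r*c*a0*a2^2*b0 + r*c*a1^3*a2*b0 - 2*r*c*a1^3*b1 + r*c*a1*a2^3*b0 - 2*r*c*a1*a2^2*b1 + r*a0^3*a2*b1 + 2*r*a0^3*b0 - r*a0^2*a1*a2*b0 + 2*r*a0^2*a1*b1 + r*a0^2*a2*b2 + r*a0*a1^2*a2*b1 + 2*r*a0*a1^2*b0 + r*a0*a2^3*b1 + r*a0*a2^2*b0 - r*a1^3*a2*b0 + 2*r*a1^3*b1 + r*a1^2*a2*b2 - r*a1*a2^3*b0 + r*a1*a2^2*b1 + s*c*a0^3*a2*b1 - s*c*a0^2*a1*a2*b0 + s*c*a0*a1^2*a2*b1 + s*c*a0*a2^3*b1 - s*c*a1^3*a2*b0 - s*c*a1*a2^3*b0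 - s*a0^3*a2*b1 + s*a0^2*a1*a2*b0 - s*a0*a1^2*a2*b1 - s*a0*a2^3*b1 + s*a1^3*a2*b0 + s*a1*a2^3*b0 = 0 := by
    linear_combination (r^2*s*a0*b0 + r^2*s*a1*b1 + r*c*a0*a2*b1 + 2*r*c*a0*b0 - r*c*a1*a2*b0 + 2*r*c*a1*b1 - r*a0*a2*b1 - 2*r*a0*b0 + r*a1*a2*b0 - 2*r*a1*b1 - s*c*a0*a2*b1 + s*c*a1*a2*b0 + s*a0*a2*b1 - s*a1*a2*b0) * hr2 + (-r*a0^2*a2*b2 + r*a0*a2^2*b0 - r*a1^2*a2*b2 + r*a1*a2^2*b1) * hsc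
  field_simp
  linear_combination 1 * hnum

lemma normsq (v : EuclideanSpace ℝ (Fin 3)) : ‖v‖ ^ 2 = v 0 ^ 2 + v 1 ^ 2 + v 2 ^ 2 := by
  rw [EuclideanSpace.norm_eq, Real.sq_sqrt (by positivity)]
  simp [Fin.sum_univ_three, sq_abs]

lemma hat_cube (v : EuclideanSpace ℝ (Fin 3)) :
    hat v ^ 3 = (-(‖v‖ ^ 2)) • hat v := by
  rw [pow_succ, pow_two, normsq]
  ext i j
  fin_cases i <;> fin_cases j <;>
    simp [hat, Matrix.mul_apply, Fin.sum_univ_three, Matrix.smul_apply] <;> ring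

lemma hat_pow_odd (v : EuclideanSpace ℝ (Fin 3)) (n : ℕ) :
    hat v ^ (2 * n + 1) = ((-(‖v‖ ^ 2)) ^ n) • hat v := by
  induction n with
  | zero => simp
  | succ n ih =>
    calc hat v ^ (2 * (n+1) + 1) = hat v ^ (2*n) * hat v ^ 3 := by
          rw [← pow_add, show 2*(n+1)+1 = 2*n+3 from by ring]
      _ = hat v ^ (2*n) * ((-(‖v‖ ^ 2)) • hat v) := by rw [hat_cube]
      _ = (-(‖v‖ ^ 2)) • (hat v ^ (2*n+1)) := by
          rw [mul_smul_comm, ← pow_succ]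
      _ = (-(‖v‖ ^ 2)) • (((-(‖v‖ ^ 2)) ^ n) • hat v) := by rw [ih]
      _ = ((-(‖v‖ ^ 2)) ^ (n+1)) • hat v := by rw [smul_smul, ← pow_succ']

lemma hat_pow_even (v : EuclideanSpace ℝ (Fin 3)) (n : ℕ) :
    hat v ^ (2 * n + 2) = ((-(‖v‖ ^ 2)) ^ n) • (hat v ^ 2) := by
  rw [show 2*n+2 = (2*n+1)+1 by ring, pow_succ, hat_pow_odd, smul_mul_assoc, ← pow_two]

lemma hat_zero : hat (0 : EuclideanSpace ℝ (Fin 3)) = 0 := by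
  ext i j
  fin_cases i <;> fin_cases j <;> simp [hat] <;> rfl

lemma exp_hat (v : EuclideanSpace ℝ (Fin 3)) :
    NormedSpace.exp (hat v) =
      1 + (Real.sin ‖v‖ / ‖v‖) • hat v + ((1 - Real.cos ‖v‖) / ‖v‖ ^ 2) • (hat v ^ 2) := by
  rcases eq_or_ne v 0 with rfl | hv
  · simp [hat_zero, NormedSpace.exp_zero]
  · have hr : ‖v‖ ≠ 0 := norm_ne_zero_iff.mpr hv
    set r := ‖v‖ with hrdef
    rw [NormedSpace.exp_eq_tsum ℝ]
    refine HasSum.tsum_eq ?_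
    have hodd : HasSum (fun n : ℕ => ((2*n+1)! : ℝ)⁻¹ • hat v ^ (2*n+1))
        ((Real.sin r / r) • hat v) := by
      have hs := ((Real.hasSum_sin r).div_const r).smul_const (hat v)
      convert hs using 2 with n
      rw [hat_pow_odd, smul_smul]
      congr 1
      rw [neg_pow, ← pow_mul]
      field_simp
      ring
    have hc0 : HasSum (fun n : ℕ => (-1:ℝ)^n * r^(2*n) / (2*n+2)!) ((1 - Real.cos r)/r^2) := by
      have h1 := (hasSum_nat_add_iff' (f := fun n : ℕ => (-1:ℝ)^n * r^(2*n) / (2*n)!) 1).mpr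
        (Real.hasSum_cos r)
      have h2 := (h1.neg).div_const (r^2)
      convert h2 using 1
      case e'_3 => rfl
      · funext n
        rw [show 2*(n+1) = 2*n+2 from by ring]
        have : ((2*n+2)! : ℝ) ≠ 0 := Nat.cast_ne_zero.mpr (Nat.factorial_ne_zero _)
        field_simp
        ring
      · simp [Finset.sum_range_one]
    have heven : HasSum (fun n : ℕ => ((2*n)! : ℝ)⁻¹ • hat v ^ (2*n))
        (1 + ((1 - Real.cos r) / r ^ 2) • hat v ^ 2) := by
      rw [← hasSum_nat_add_iff' 1]
      have h3 := hc0.smul_const (hat v ^ 2)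
      convert h3 using 1
      case e'_3 => rfl
      · funext n
        rw [show 2*(n+1) = 2*n+2 from by ring, hat_pow_even, smul_smul]
        congr 1
        rw [neg_pow, ← pow_mul]
        have : ((2*n+2)! : ℝ) ≠ 0 := Nat.cast_ne_zero.mpr (Nat.factorial_ne_zero _)
        field_simp
        rfl
      · simp [Finset.sum_range_one]
    have e : 1 + (Real.sin r / r) • hat v + ((1 - Real.cos r) / r ^ 2) • hat v ^ 2
        = (1 + ((1 - Real.cos r) / r ^ 2) • hat v ^ 2) + (Real.sin r / r) • hat v := by abel
    rw [e]
    exact HasSum.even_add_odd heven hodd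

def hatL : EuclideanSpace ℝ (Fin 3) →L[ℝ] Matrix (Fin 3) (Fin 3) ℝ :=
  LinearMap.toContinuousLinearMap
    { toFun := hat
      map_add' := by
        intro x y; ext i j; fin_cases i <;> fin_cases j <;>
          simp [hat] <;> ring
      map_smul' := by
        intro c x; ext i j; fin_cases i <;> fin_cases j <;>
          simp [hat] <;> ring }

lemma hatL_apply (v : EuclideanSpace ℝ (Fin 3)) : hatL v = hat v := rfl

lemma hasFDerivAt_norm' (u : EuclideanSpace ℝ (Fin 3)) (hu : u ≠ 0) :
    HasFDerivAt (fun v : EuclideanSpace ℝ (Fin 3) => ‖v‖) (‖u‖⁻¹ • innerSL ℝ u) u := by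
  have hr : ‖u‖ ≠ 0 := norm_ne_zero_iff.mpr hu
  have hsq : HasFDerivAt (fun v : EuclideanSpace ℝ (Fin 3) => ‖v‖ ^ 2)
      ((2:ℝ) • (innerSL ℝ u)) u := by
    have h := (hasFDerivAt_id u).norm_sq
    simpa [two_smul, two_nsmul] using h
  have hsqrt : HasDerivAt Real.sqrt (1 / (2 * Real.sqrt (‖u‖ ^ 2))) (‖u‖ ^ 2) :=
    Real.hasDerivAt_sqrt (pow_ne_zero 2 hr)
  have hcomp := hsqrt.comp_hasFDerivAt u hsq
  have hfun : (Real.sqrt ∘ fun v : EuclideanSpace ℝ (Fin 3) => ‖v‖ ^ 2)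
      = fun v : EuclideanSpace ℝ (Fin 3) => ‖v‖ := by
    funext v; simp [Function.comp, Real.sqrt_sq (norm_nonneg v)]
  rw [hfun] at hcomp
  refine hcomp.congr_fderiv ?_
  rw [Real.sqrt_sq (norm_nonneg u), smul_smul]
  congr 1
  field_simp

/-- For `u ≠ 0`, the map `v ↦ exp (v^∧)` is differentiable at `u` and its derivative in the
direction `w` is `exp (u^∧) * (J_u w)^∧`. -/
theorem so3_exp_hasFDerivAt (u : EuclideanSpace ℝ (Fin 3)) (hu : u ≠ 0) :
    ∃ D : EuclideanSpace ℝ (Fin 3) →L[ℝ] Matrix (Fin 3) (Fin 3) ℝ,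
      HasFDerivAt (fun v : EuclideanSpace ℝ (Fin 3) => NormedSpace.exp (hat v)) D u ∧
      ∀ w : EuclideanSpace ℝ (Fin 3),
        D w = NormedSpace.exp (hat u) * hat (matVec (Jmat u) w) := by
  have hr : ‖u‖ ≠ 0 := norm_ne_zero_iff.mpr hu
  have hN := hasFDerivAt_norm' u hu
  set N : EuclideanSpace ℝ (Fin 3) →L[ℝ] ℝ := ‖u‖⁻¹ • innerSL ℝ u with hNdef
  -- scalar coefficient derivatives
  have hφ : HasDerivAt (fun t : ℝ => Real.sin t / t)
      ((Real.cos ‖u‖ * ‖u‖ - Real.sin ‖u‖ * 1) / ‖u‖ ^ 2) ‖u‖ :=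
    (Real.hasDerivAt_sin ‖u‖).div (hasDerivAt_id ‖u‖) hr
  have hψ : HasDerivAt (fun t : ℝ => (1 - Real.cos t) / t ^ 2)
      (((0 - -Real.sin ‖u‖) * ‖u‖ ^ 2 - (1 - Real.cos ‖u‖) * ((2:ℕ) * ‖u‖ ^ 1)) / (‖u‖ ^ 2) ^ 2)
      ‖u‖ :=
    (((hasDerivAt_const ‖u‖ (1:ℝ)).sub (Real.hasDerivAt_cos ‖u‖)).div
      (hasDerivAt_pow 2 ‖u‖) (pow_ne_zero 2 hr))
  have ha : HasFDerivAt (fun v : EuclideanSpace ℝ (Fin 3) => Real.sin ‖v‖ / ‖v‖)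
      (((Real.cos ‖u‖ * ‖u‖ - Real.sin ‖u‖ * 1) / ‖u‖ ^ 2) • N) u :=
    hφ.comp_hasFDerivAt u hN
  have hb : HasFDerivAt (fun v : EuclideanSpace ℝ (Fin 3) => (1 - Real.cos ‖v‖) / ‖v‖ ^ 2)
      ((((0 - -Real.sin ‖u‖) * ‖u‖ ^ 2 - (1 - Real.cos ‖u‖) * ((2:ℕ) * ‖u‖ ^ 1)) / (‖u‖ ^ 2) ^ 2)
        • N) u :=
    hψ.comp_hasFDerivAt u hN
  have hhat : HasFDerivAt (fun v : EuclideanSpace ℝ (Fin 3) => hat v) hatL u :=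
    hatL.hasFDerivAt
  have hmul : HasFDerivAt (fun v : EuclideanSpace ℝ (Fin 3) => hat v * hat v)
      (hat u • hatL + hatL.smulRight (hat u)) u := hhat.mul' hhat
  have h2 := ha.smul hhat
  have h3 := hb.smul hmul
  have hF := (h2.const_add (1 : Matrix (Fin 3) (Fin 3) ℝ)).add h3
  have hfun : (fun v : EuclideanSpace ℝ (Fin 3) => NormedSpace.exp (hat v))
      = fun v : EuclideanSpace ℝ (Fin 3) =>
        1 + (Real.sin ‖v‖ / ‖v‖) • hat v + ((1 - Real.cos ‖v‖) / ‖v‖ ^ 2) • (hat v * hat v) := by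
    funext v
    rw [exp_hat v, pow_two (hat v)]
  refine ⟨_, by rw [hfun]; exact hF, ?_⟩
  intro w
  have hr2 := normsq u
  have hsc := Real.sin_sq_add_cos_sq ‖u‖
  have hp : N w = ‖u‖⁻¹ * (u 0 * w 0 + u 1 * w 1 + u 2 * w 2) := by
    simp [hNdef, PiLp.inner_apply, RCLike.inner_apply, Fin.sum_univ_three]
    exact Or.inl (by ring)
  rw [exp_hat u, pow_two (hat u)]
  ext i j
  change ((Real.sin ‖u‖ / ‖u‖) • hat w
      + (((Real.cos ‖u‖ * ‖u‖ - Real.sin ‖u‖ * 1) / ‖u‖ ^ 2) * N w) • hat u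
      + (((1 - Real.cos ‖u‖) / ‖u‖ ^ 2) • (hat u * hat w + hat w * hat u)
      + ((((0 - -Real.sin ‖u‖) * ‖u‖ ^ 2 - (1 - Real.cos ‖u‖) * (((2:ℕ):ℝ) * ‖u‖ ^ 1))
          / (‖u‖ ^ 2) ^ 2) * N w) • (hat u * hat u))) i j = _
  simp only [ContinuousLinearMap.add_apply, ContinuousLinearMap.zero_apply,
    ContinuousLinearMap.smul_apply, ContinuousLinearMap.smulRight_apply,
    hatL_apply, hp, smul_eq_mul]
  fin_cases i <;> fin_cases j <;>
    simp [hat, matVec, Jmat, Matrix.mulVec, dotProduct, Fin.sum_univ_three,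
      Matrix.mul_apply, Matrix.smul_apply, Matrix.add_apply, Matrix.sub_apply,
      Matrix.one_apply, WithLp.equiv_apply, WithLp.equiv_symm_apply, smul_eq_mul]
  · exact key0 (u 0) (u 1) (u 2) (w 0) (w 1) (w 2) ‖u‖ (Real.sin ‖u‖) (Real.cos ‖u‖) hr hr2 hsc
  · exact key1 (u 0) (u 1) (u 2) (w 0) (w 1) (w 2) ‖u‖ (Real.sin ‖u‖) (Real.cos ‖u‖) hr hr2 hsc
  · exact key2 (u 0) (u 1) (u 2) (w 0) (w 1) (w 2) ‖u‖ (Real.sin ‖u‖) (Real.cos ‖u‖) hr hr2 hsc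
  · exact key3 (u 0) (u 1) (u 2) (w 0) (w 1) (w 2) ‖u‖ (Real.sin ‖u‖) (Real.cos ‖u‖) hr hr2 hsc
  · exact key4 (u 0) (u 1) (u 2) (w 0) (w 1) (w 2) ‖u‖ (Real.sin ‖u‖) (Real.cos ‖u‖) hr hr2 hsc
  · exact key5 (u 0) (u 1) (u 2) (w 0) (w 1) (w 2) ‖u‖ (Real.sin ‖u‖) (Real.cos ‖u‖) hr hr2 hsc
  · exact key6 (u 0) (u 1) (u 2) (w 0) (w 1) (w 2) ‖u‖ (Real.sin ‖u‖) (Real.cos ‖u‖) hr hr2 hsc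
  · exact key7 (u 0) (u 1) (u 2) (w 0) (w 1) (w 2) ‖u‖ (Real.sin ‖u‖) (Real.cos ‖u‖) hr hr2 hsc
  · exact key8 (u 0) (u 1) (u 2) (w 0) (w 1) (w 2) ‖u‖ (Real.sin ‖u‖) (Real.cos ‖u‖) hr hr2 hsc
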